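/- arXiv:2505.11877 — 4 statements merged into one kernel-verified Lean document; each statement's English description precedes it below -/
import Mathlib

section
/- Let f_h and f_l be likelihood-ratio experiments on [a_h,b_h] and [a_l,b_l] respectively, with 0 ≤ a_h < a_l < b_l < b_h ≤ ∞, and write f_{t,0} = f_t, f_{t,1}(ℓ) = ℓ·f_t(ℓ), F_{t,s}(ℓ) = ∫₀^ℓ f_{t,s}(u) du. Assume that for each state s ∈ {0,1} and each ℓ ∈ (a_l,b_l): f_{l,s}(ℓ)/F_{l,s}(ℓ) > f_{h,s}(ℓ)/F_{h,s}(ℓ) and f_{l,s}(ℓ)/(1−F_{l,s}(ℓ)) > f_{h,s}(ℓ)/(1−F_{h,s}(ℓ)). Fix μ ∈ [1/2,1), define H_{t,s}(β) = F_{t,s}((1−μ)β/(μ(1−β))) for β ∈ [0,1), and belief bounds β̲_t = μa_t/(μa_t+1−μ), β̄_t = μb_t/(μb_t+1−μ). Then for each state s ∈ {0,1} there exists a unique β†_s ∈ (β̲_l, β̄_l) such that for every β ∈ (β̲_h, β̄_h): H_{h,s}(β) − H_{l,s}(β) > 0 if β < β†_s, = 0 if β = β†_s, and < 0 if β > β†_s.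 -/
open MeasureTheory Set

/-- State-0 CDF of a likelihood-ratio experiment. -/
noncomputable def F0 (f : ℝ → ℝ) (ℓ : ℝ) : ℝ := ∫ u in (0:ℝ)..ℓ, f u

/-- State-1 CDF of a likelihood-ratio experiment. -/
noncomputable def F1 (f : ℝ → ℝ) (ℓ : ℝ) : ℝ := ∫ u in (0:ℝ)..ℓ, u * f u

/-- State-`s` CDF, `s ∈ {0,1}`. -/
noncomputable def Fs (f : ℝ → ℝ) (s : Fin 2) (ℓ : ℝ) : ℝ :=
  if s = 0 then F0 f ℓ else F1 f ℓ

/-- State-`s` density, `s ∈ {0,1}`: `f` in state 0 and `ℓ·f(ℓ)` in state 1. -/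
noncomputable def fs (f : ℝ → ℝ) (s : Fin 2) (ℓ : ℝ) : ℝ :=
  if s = 0 then f ℓ else ℓ * f ℓ

/-- A likelihood-ratio experiment on `[a, b]` with `0 ≤ a < b ≤ ∞`. -/
structure IsLRExperiment (f : ℝ → ℝ) (a : ℝ) (b : EReal) : Prop where
  a_nonneg : 0 ≤ a
  a_lt_b : (a : EReal) < b
  cont : Continuous f
  pos : ∀ ℓ : ℝ, a < ℓ → (ℓ : EReal) < b → 0 < f ℓ
  zero_outside : ∀ ℓ : ℝ, (ℓ < a ∨ b < (ℓ : EReal)) → f ℓ = 0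
  int_one : (∫ ℓ in Ioi (0:ℝ), f ℓ) = 1
  int_mean : (∫ ℓ in Ioi (0:ℝ), ℓ * f ℓ) = 1

/-- The low type's experiment is noisier: reverse-hazard-rate and hazard-rate dominance
in each state on the interior of the low type's support. -/
def Noisier (fh fl : ℝ → ℝ) (a_l b_l : ℝ) : Prop :=
  ∀ s : Fin 2, ∀ ℓ : ℝ, a_l < ℓ → ℓ < b_l →
    fs fl s ℓ / Fs fl s ℓ > fs fh s ℓ / Fs fh s ℓ ∧
    fs fl s ℓ / (1 - Fs fl s ℓ) > fs fh s ℓ / (1 - Fs fh s ℓ)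

/-- Likelihood-ratio cutoff corresponding to belief `β` under prior `μ`:
`z(β) = (1−μ)β/(μ(1−β))`. -/
noncomputable def zOf (μ β : ℝ) : ℝ := (1 - μ) * β / (μ * (1 - β))

/-- Distribution of the posterior state belief conditional on state `s`:
`H_{t,s}(β) = F_{t,s}((1−μ)β/(μ(1−β)))`. -/
noncomputable def H (f : ℝ → ℝ) (μ : ℝ) (s : Fin 2) (β : ℝ) : ℝ :=
  Fs f s (zOf μ β)

/-- Posterior belief induced by likelihood ratio `x` under prior `μ`:
`betaOf μ x = μx/(μx + 1 − μ)`.  For `x = a_t` (resp. `x = b_t`) this is the lowest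
(resp. highest) posterior belief `β̲_t` (resp. `β̄_t`) of type `t`. -/
noncomputable def betaOf (μ x : ℝ) : ℝ := μ * x / (μ * x + 1 - μ)

section Aux
variable {f : ℝ → ℝ} {a : ℝ} {b : EReal}

lemma LR_zero_le (h : IsLRExperiment f a b) {ℓ : ℝ} (hℓ : ℓ ≤ a) : f ℓ = 0 := by
  have h1 : EqOn f (fun _ => (0:ℝ)) (Iio a) := fun x hx => h.zero_outside x (Or.inl hx)
  have h2 := h1.closure h.cont continuous_const
  rw [closure_Iio] at h2
  exact h2 hℓ

lemma LR_zero_ge (h : IsLRExperiment f a b) {ℓ : ℝ} (hℓ : b ≤ (ℓ : EReal)) : f ℓ = 0 := by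
  have h1 : EqOn f (fun _ => (0:ℝ)) (Ioi ℓ) := fun x hx =>
    h.zero_outside x (Or.inr (lt_of_le_of_lt hℓ (by exact_mod_cast hx)))
  have h2 := h1.closure h.cont continuous_const
  rw [closure_Ioi] at h2
  exact h2 (le_refl ℓ)

lemma LR_f_nonneg (h : IsLRExperiment f a b) (ℓ : ℝ) : 0 ≤ f ℓ := by
  rcases le_or_gt ℓ a with hc | hc
  · rw [LR_zero_le h hc]
  · rcases lt_or_ge (ℓ : EReal) b with hc2 | hc2
    · exact (h.pos ℓ hc hc2).le
    · rw [LR_zero_ge h hc2]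

lemma fs_eq0 {s : Fin 2} (f : ℝ → ℝ) (hs : s = 0) : fs f s = f :=
  funext fun ℓ => if_pos hs

lemma fs_eq1 {s : Fin 2} (f : ℝ → ℝ) (hs : s ≠ 0) : fs f s = fun ℓ => ℓ * f ℓ :=
  funext fun ℓ => if_neg hs

lemma fs_cont (h : IsLRExperiment f a b) (s : Fin 2) : Continuous (fs f s) := by
  rcases eq_or_ne s 0 with hs | hs
  · rw [fs_eq0 f hs]; exact h.cont
  · rw [fs_eq1 f hs]; exact continuous_id.mul h.cont

lemma fs_nonneg (h : IsLRExperiment f a b) (s : Fin 2) (ℓ : ℝ) : 0 ≤ fs f s ℓ := by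
  rcases eq_or_ne s 0 with hs | hs
  · rw [fs_eq0 f hs]; exact LR_f_nonneg h ℓ
  · rw [fs_eq1 f hs]; show 0 ≤ ℓ * f ℓ
    rcases le_or_gt 0 ℓ with hc | hc
    · exact mul_nonneg hc (LR_f_nonneg h ℓ)
    · rw [LR_zero_le h (hc.le.trans h.a_nonneg), mul_zero]

lemma fs_pos (h : IsLRExperiment f a b) (s : Fin 2) {ℓ : ℝ} (h1 : a < ℓ)
    (h2 : (ℓ : EReal) < b) : 0 < fs f s ℓ := by
  rcases eq_or_ne s 0 with hs | hs
  · rw [fs_eq0 f hs]; exact h.pos ℓ h1 h2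
  · rw [fs_eq1 f hs]
    exact mul_pos (lt_of_le_of_lt h.a_nonneg h1) (h.pos ℓ h1 h2)

lemma fs_zero_le (h : IsLRExperiment f a b) (s : Fin 2) {ℓ : ℝ} (hℓ : ℓ ≤ a) :
    fs f s ℓ = 0 := by
  rcases eq_or_ne s 0 with hs | hs
  · rw [fs_eq0 f hs]; exact LR_zero_le h hℓ
  · rw [fs_eq1 f hs]; show ℓ * f ℓ = 0; rw [LR_zero_le h hℓ, mul_zero]

lemma fs_zero_ge (h : IsLRExperiment f a b) (s : Fin 2) {ℓ : ℝ} (hℓ : b ≤ (ℓ : EReal)) :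
    fs f s ℓ = 0 := by
  rcases eq_or_ne s 0 with hs | hs
  · rw [fs_eq0 f hs]; exact LR_zero_ge h hℓ
  · rw [fs_eq1 f hs]; show ℓ * f ℓ = 0; rw [LR_zero_ge h hℓ, mul_zero]

lemma Fs_eq (f : ℝ → ℝ) (s : Fin 2) (ℓ : ℝ) :
    Fs f s ℓ = ∫ u in (0:ℝ)..ℓ, fs f s u := by
  rcases eq_or_ne s 0 with hs | hs
  · simp only [Fs, fs, if_pos hs, F0]
  · simp only [Fs, fs, if_neg hs, F1]

lemma Fs_hasDerivAt (h : IsLRExperiment f a b) (s : Fin 2) (ℓ : ℝ) :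
    HasDerivAt (Fs f s) (fs f s ℓ) ℓ := by
  have : HasDerivAt (fun u => ∫ x in (0:ℝ)..u, fs f s x) (fs f s ℓ) ℓ :=
    intervalIntegral.integral_hasDerivAt_right ((fs_cont h s).intervalIntegrable 0 ℓ)
      ((fs_cont h s).stronglyMeasurableAtFilter _ _) (fs_cont h s).continuousAt
  exact this.congr_of_eventuallyEq (Filter.Eventually.of_forall fun x => Fs_eq f s x)

lemma Fs_continuous (h : IsLRExperiment f a b) (s : Fin 2) : Continuous (Fs f s) :=
  continuous_iff_continuousAt.2 fun ℓ => (Fs_hasDerivAt h s ℓ).continuousAt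

lemma Fs_zero (h : IsLRExperiment f a b) (s : Fin 2) {ℓ : ℝ} (hℓ : ℓ ≤ a) :
    Fs f s ℓ = 0 := by
  rw [Fs_eq]
  have : EqOn (fs f s) (fun _ => (0:ℝ)) (uIcc 0 ℓ) := by
    intro x hx
    have hx2 : x ≤ a := le_trans (hx.2.trans (max_le h.a_nonneg hℓ)) le_rfl
    exact fs_zero_le h s hx2
  rw [intervalIntegral.integral_congr this, intervalIntegral.integral_const, smul_zero]

lemma Fs_pos (h : IsLRExperiment f a b) (s : Fin 2) {ℓ : ℝ} (h1 : a < ℓ)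
    (h2 : (ℓ : EReal) < b) : 0 < Fs f s ℓ := by
  rw [Fs_eq]
  have hadd := intervalIntegral.integral_add_adjacent_intervals (μ := volume)
    ((fs_cont h s).intervalIntegrable 0 a) ((fs_cont h s).intervalIntegrable a ℓ)
  rw [← hadd]
  have hz : (∫ x in (0:ℝ)..a, fs f s x) = 0 := by
    have heq := Fs_zero h s (le_refl a)
    rwa [Fs_eq] at heq
  rw [hz, zero_add]
  apply intervalIntegral.intervalIntegral_pos_of_pos_on
    ((fs_cont h s).intervalIntegrable a ℓ)
  · intro x hx
    exact fs_pos h s hx.1 (lt_trans (by exact_mod_cast hx.2) h2)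
  · exact h1

lemma Fs_integrableOn (h : IsLRExperiment f a b) (s : Fin 2) :
    IntegrableOn (fs f s) (Ioi (0:ℝ)) volume := by
  by_contra hc
  have hint : (∫ x in Ioi (0:ℝ), fs f s x) = 1 := by
    rcases eq_or_ne s 0 with hs | hs
    · rw [fs_eq0 f hs]; exact h.int_one
    · rw [fs_eq1 f hs]; exact h.int_mean
  rw [MeasureTheory.integral_undef hc] at hint
  norm_num at hint

lemma Fs_decomp (h : IsLRExperiment f a b) (s : Fin 2) {ℓ : ℝ} (hℓ : 0 ≤ ℓ) :
    Fs f s ℓ = 1 - ∫ x in Ioi ℓ, fs f s x := by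
  have hint : (∫ x in Ioi (0:ℝ), fs f s x) = 1 := by
    rcases eq_or_ne s 0 with hs | hs
    · rw [fs_eq0 f hs]; exact h.int_one
    · rw [fs_eq1 f hs]; exact h.int_mean
  have hsplit : (∫ x in Ioi (0:ℝ), fs f s x)
      = (∫ x in Ioc 0 ℓ, fs f s x) + ∫ x in Ioi ℓ, fs f s x := by
    rw [← Set.Ioc_union_Ioi_eq_Ioi hℓ]
    exact MeasureTheory.setIntegral_union (Set.Ioc_disjoint_Ioi le_rfl)
      measurableSet_Ioi
      ((Fs_integrableOn h s).mono_set Set.Ioc_subset_Ioi_self)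
      ((Fs_integrableOn h s).mono_set (Set.Ioi_subset_Ioi hℓ))
  rw [Fs_eq, intervalIntegral.integral_of_le hℓ]
  rw [hint] at hsplit
  linarith

lemma Fs_one (h : IsLRExperiment f a b) (s : Fin 2) {c ℓ : ℝ} (hb : b = (c : EReal))
    (hℓ0 : 0 ≤ ℓ) (hℓ : c ≤ ℓ) : Fs f s ℓ = 1 := by
  rw [Fs_decomp h s hℓ0]
  have : (∫ x in Ioi ℓ, fs f s x) = 0 := by
    rw [MeasureTheory.setIntegral_congr_fun measurableSet_Ioi
      (g := fun _ => (0:ℝ)) (fun x hx => fs_zero_ge h s (by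
        rw [hb]; exact_mod_cast hℓ.trans (le_of_lt hx)))]
    simp
  rw [this]; ring

lemma Fs_lt_one (h : IsLRExperiment f a b) (s : Fin 2) {ℓ : ℝ} (hℓ0 : 0 ≤ ℓ)
    (hℓ : (ℓ : EReal) < b) : Fs f s ℓ < 1 := by
  rw [Fs_decomp h s hℓ0]
  have hcb : ((max ℓ a : ℝ) : EReal) < b := by
    rcases max_cases ℓ a with ⟨heq, _⟩ | ⟨heq, _⟩ <;> rw [heq]
    · exact hℓ
    · exact h.a_lt_b
  obtain ⟨d, hd1, hd2⟩ := EReal.lt_iff_exists_real_btwn.1 hcb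
  have hd1' : max ℓ a < d := by exact_mod_cast hd1
  have htail : (0:ℝ) < ∫ x in Ioi ℓ, fs f s x := by
    have hmono : (∫ x in Ioc (max ℓ a) d, fs f s x) ≤ ∫ x in Ioi ℓ, fs f s x := by
      apply MeasureTheory.setIntegral_mono_set
        ((Fs_integrableOn h s).mono_set (Set.Ioi_subset_Ioi hℓ0))
        (Filter.Eventually.of_forall fun x => fs_nonneg h s x)
      exact Filter.Eventually.of_forall fun x hx =>
        lt_of_le_of_lt (le_max_left ℓ a) hx.1
    have hpos : (0:ℝ) < ∫ x in Ioc (max ℓ a) d, fs f s x := by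
      rw [← intervalIntegral.integral_of_le hd1'.le]
      apply intervalIntegral.intervalIntegral_pos_of_pos_on
        ((fs_cont h s).intervalIntegrable _ _) _ hd1'
      intro x hx
      exact fs_pos h s (lt_of_le_of_lt (le_max_right ℓ a) hx.1)
        (lt_trans (by exact_mod_cast hx.2) hd2)
    linarith
  linarith

end Aux

section Cross
variable {fh fl : ℝ → ℝ} {a_h a_l b_l : ℝ} {b_h : EReal}

lemma ratio_anti (hh : IsLRExperiment fh a_h b_h) (hl : IsLRExperiment fl a_l (b_l : EReal))
    (hab : a_h < a_l) (hbb : (b_l : EReal) < b_h) (hdom : Noisier fh fl a_l b_l)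
    (s : Fin 2) {x y : ℝ} (hx : x ∈ Ioo a_l b_l) (hy : y ∈ Ioo a_l b_l) (hxy : x < y) :
    Fs fh s y * Fs fl s x < Fs fh s x * Fs fl s y := by
  have hsub : Icc x y ⊆ Ioo a_l b_l := fun z hz => ⟨lt_of_lt_of_le hx.1 hz.1, lt_of_le_of_lt hz.2 hy.2⟩
  have hFl : ∀ z ∈ Ioo a_l b_l, 0 < Fs fl s z := fun z hz =>
    Fs_pos hl s hz.1 (by exact_mod_cast hz.2)
  have hFh : ∀ z ∈ Ioo a_l b_l, 0 < Fs fh s z := fun z hz =>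
    Fs_pos hh s (lt_trans hab hz.1) (lt_trans (by exact_mod_cast hz.2) hbb)
  have key : StrictAntiOn (fun ℓ => Fs fh s ℓ / Fs fl s ℓ) (Icc x y) := by
    apply strictAntiOn_of_deriv_neg (convex_Icc x y)
    · exact ((Fs_continuous hh s).continuousOn).div ((Fs_continuous hl s).continuousOn)
        (fun z hz => (hFl z (hsub hz)).ne')
    · intro z hz
      rw [interior_Icc] at hz
      have hz' : z ∈ Ioo a_l b_l := hsub (Ioo_subset_Icc_self hz)
      have hFl0 := hFl z hz'
      have hFh0 := hFh z hz'
      have hd : HasDerivAt (fun ℓ => Fs fh s ℓ / Fs fl s ℓ)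
          ((fs fh s z * Fs fl s z - Fs fh s z * fs fl s z) / (Fs fl s z)^2) z :=
        (Fs_hasDerivAt hh s z).div (Fs_hasDerivAt hl s z) hFl0.ne'
      rw [hd.deriv]
      apply div_neg_of_neg_of_pos _ (pow_pos hFl0 2)
      have hrh := (hdom s z hz'.1 hz'.2).1
      rw [gt_iff_lt, div_lt_div_iff₀ hFh0 hFl0] at hrh
      nlinarith
  have h1 := key (left_mem_Icc.2 hxy.le) (right_mem_Icc.2 hxy.le) hxy
  simp only at h1
  rw [div_lt_div_iff₀ (hFl y hy) (hFl x hx)] at h1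
  linarith

lemma crossing (hh : IsLRExperiment fh a_h b_h) (hl : IsLRExperiment fl a_l (b_l : EReal))
    (hab : a_h < a_l) (hbb : (b_l : EReal) < b_h) (hdom : Noisier fh fl a_l b_l)
    (s : Fin 2) : ∃ ld ∈ Ioo a_l b_l,
      ∀ ℓ : ℝ, a_h < ℓ → ((ℓ : EReal) < b_h) →
        ((ℓ < ld → Fs fl s ℓ < Fs fh s ℓ) ∧ (ℓ = ld → Fs fh s ℓ = Fs fl s ℓ) ∧
         (ld < ℓ → Fs fh s ℓ < Fs fl s ℓ)) := by
  have halb : a_l < b_l := by exact_mod_cast hl.a_lt_b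
  have ha0 : 0 ≤ a_l := hl.a_nonneg
  -- sign at a_l and b_l
  have hGa : 0 < Fs fh s a_l - Fs fl s a_l := by
    rw [Fs_zero hl s le_rfl, sub_zero]
    exact Fs_pos hh s hab (lt_trans (by exact_mod_cast halb) hbb)
  have hGb : Fs fh s b_l - Fs fl s b_l < 0 := by
    rw [Fs_one hl s rfl (ha0.trans halb.le) le_rfl]
    have := Fs_lt_one hh s (ha0.trans halb.le) hbb
    linarith
  -- IVT
  have hGcont : ContinuousOn (fun ℓ => Fs fh s ℓ - Fs fl s ℓ) (Icc a_l b_l) :=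
    ((Fs_continuous hh s).sub (Fs_continuous hl s)).continuousOn
  have hmem : (0:ℝ) ∈ Icc (Fs fh s b_l - Fs fl s b_l) (Fs fh s a_l - Fs fl s a_l) :=
    ⟨hGb.le, hGa.le⟩
  obtain ⟨ld, hld, hld0⟩ := intermediate_value_Icc' halb.le hGcont hmem
  have hne1 : ld ≠ a_l := fun h => by rw [h] at hld0; simp only at hld0; linarith
  have hne2 : ld ≠ b_l := fun h => by rw [h] at hld0; simp only at hld0; linarith
  have hldo : ld ∈ Ioo a_l b_l := ⟨lt_of_le_of_ne hld.1 (Ne.symm hne1), lt_of_le_of_ne hld.2 hne2⟩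
  simp only at hld0
  have hEq : Fs fh s ld = Fs fl s ld := by linarith
  have hFlld : 0 < Fs fl s ld := Fs_pos hl s hldo.1 (by exact_mod_cast hldo.2)
  refine ⟨ld, hldo, fun ℓ hℓ1 hℓ2 => ⟨?_, ?_, ?_⟩⟩
  · intro hlt
    rcases le_or_gt ℓ a_l with hc | hc
    · rw [Fs_zero hl s hc]
      exact Fs_pos hh s hℓ1 hℓ2
    · have hℓo : ℓ ∈ Ioo a_l b_l := ⟨hc, lt_trans hlt hldo.2⟩
      have := ratio_anti hh hl hab hbb hdom s hℓo hldo hlt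
      rw [hEq] at this
      nlinarith [Fs_pos hl s hℓo.1 (show ((ℓ:ℝ):EReal) < (b_l:EReal) by exact_mod_cast hℓo.2)]
  · intro heq; rw [heq, hEq]
  · intro hlt
    rcases le_or_gt b_l ℓ with hc | hc
    · rw [Fs_one hl s rfl ((ha0.trans halb.le).trans hc) hc]
      exact Fs_lt_one hh s ((ha0.trans halb.le).trans hc) hℓ2
    · have hℓo : ℓ ∈ Ioo a_l b_l := ⟨lt_trans hldo.1 hlt, hc⟩
      have := ratio_anti hh hl hab hbb hdom s hldo hℓo hlt
      rw [hEq] at this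
      nlinarith [Fs_pos hl s hℓo.1 (show ((ℓ:ℝ):EReal) < (b_l:EReal) by exact_mod_cast hℓo.2)]

end Cross

section Belief
variable {μ x y β β1 β2 : ℝ}

lemma denom_pos (hμ0 : 0 < μ) (hμ1 : μ < 1) (hx : 0 ≤ x) : 0 < μ * x + 1 - μ := by nlinarith

lemma betaOf_lt_one (hμ0 : 0 < μ) (hμ1 : μ < 1) (hx : 0 ≤ x) : betaOf μ x < 1 := by
  rw [betaOf, div_lt_one (denom_pos hμ0 hμ1 hx)]; linarith

lemma betaOf_nonneg (hμ0 : 0 < μ) (hμ1 : μ < 1) (hx : 0 ≤ x) : 0 ≤ betaOf μ x :=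
  div_nonneg (mul_nonneg hμ0.le hx) (denom_pos hμ0 hμ1 hx).le

lemma zOf_betaOf (hμ0 : 0 < μ) (hμ1 : μ < 1) (hx : 0 ≤ x) : zOf μ (betaOf μ x) = x := by
  have hD := denom_pos hμ0 hμ1 hx
  have hμ' : (1:ℝ) - μ ≠ 0 := by linarith
  rw [zOf, betaOf]
  rw [show 1 - μ * x / (μ * x + 1 - μ) = (1 - μ)/(μ * x + 1 - μ) by
    field_simp
    ring]
  have hne : μ * ((1 - μ) / (μ * x + 1 - μ)) ≠ 0 :=
    mul_ne_zero hμ0.ne' (div_ne_zero hμ' hD.ne')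
  rw [div_eq_iff hne]
  field_simp

lemma betaOf_lt_betaOf (hμ0 : 0 < μ) (hμ1 : μ < 1) (hx : 0 ≤ x) (hxy : x < y) :
    betaOf μ x < betaOf μ y := by
  rw [betaOf, betaOf, div_lt_div_iff₀ (denom_pos hμ0 hμ1 hx) (denom_pos hμ0 hμ1 (hx.trans hxy.le))]
  nlinarith [mul_lt_mul_of_pos_left hxy (mul_pos hμ0 (sub_pos.mpr hμ1))]

lemma zOf_lt_zOf (hμ0 : 0 < μ) (hμ1 : μ < 1) (h12 : β1 < β2) (h2 : β2 < 1) :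
    zOf μ β1 < zOf μ β2 := by
  have h1 : β1 < 1 := h12.trans h2
  rw [zOf, zOf, div_lt_div_iff₀ (by nlinarith) (by nlinarith)]
  nlinarith [mul_pos (mul_pos hμ0 (sub_pos.mpr hμ1)) (sub_pos.mpr h12)]

end Belief

/-- Single-crossing Lemma: in each state `s` there is a unique crossing belief
`β†_s ∈ (β̲_l, β̄_l)` at which `H_{h,s} − H_{l,s}` changes sign from positive to negative
over the high type's belief range `(β̲_h, β̄_h)` (the condition `β < β̄_h` is expressed as
`β < 1` together with `z(β) < b_h`, which also covers the case `b_h = ∞`). -/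
theorem stmt_1 (fh fl : ℝ → ℝ) (a_h a_l b_l : ℝ) (b_h : EReal)
    (hh : IsLRExperiment fh a_h b_h) (hl : IsLRExperiment fl a_l (b_l : EReal))
    (hab : a_h < a_l) (hbb : (b_l : EReal) < b_h)
    (hdom : Noisier fh fl a_l b_l)
    (μ : ℝ) (hμ : μ ∈ Set.Ico (1/2 : ℝ) 1) :
    ∀ s : Fin 2, ∃! βd : ℝ,
      βd ∈ Set.Ioo (betaOf μ a_l) (betaOf μ b_l) ∧
      ∀ β : ℝ, betaOf μ a_h < β → β < 1 → ((zOf μ β : ℝ) : EReal) < b_h →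
        ((β < βd → H fh μ s β - H fl μ s β > 0) ∧
         (β = βd → H fh μ s β - H fl μ s β = 0) ∧
         (βd < β → H fh μ s β - H fl μ s β < 0)) := by
  intro s
  have hμ0 : 0 < μ := lt_of_lt_of_le (by norm_num) hμ.1
  have hμ1 : μ < 1 := hμ.2
  have halb : a_l < b_l := by exact_mod_cast hl.a_lt_b
  have hah0 : 0 ≤ a_h := hh.a_nonneg
  have hal0 : 0 ≤ a_l := hl.a_nonneg
  obtain ⟨ld, hldo, hsign⟩ := crossing hh hl hab hbb hdom s
  have hld0 : 0 ≤ ld := hal0.trans hldo.1.le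
  set βd := betaOf μ ld with hβddef
  have hzβd : zOf μ βd = ld := zOf_betaOf hμ0 hμ1 hld0
  have hβd1 : βd < 1 := betaOf_lt_one hμ0 hμ1 hld0
  have hldah : a_h < ld := hab.trans hldo.1
  have hldbh : ((ld : ℝ) : EReal) < b_h := lt_trans (by exact_mod_cast hldo.2) hbb
  have hEq0 : Fs fh s ld - Fs fl s ld = 0 :=
    sub_eq_zero.mpr ((hsign ld hldah hldbh).2.1 rfl)
  have key : ∀ β : ℝ, betaOf μ a_h < β → β < 1 → ((zOf μ β : ℝ) : EReal) < b_h →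
      ((β < βd → H fh μ s β - H fl μ s β > 0) ∧
       (β = βd → H fh μ s β - H fl μ s β = 0) ∧
       (βd < β → H fh μ s β - H fl μ s β < 0)) := by
    intro β hβ1 hβ2 hβ3
    have hz1 : a_h < zOf μ β := by
      have := zOf_lt_zOf hμ0 hμ1 hβ1 hβ2
      rwa [zOf_betaOf hμ0 hμ1 hah0] at this
    have hs3 := hsign (zOf μ β) hz1 hβ3
    refine ⟨fun hlt => ?_, fun heq => ?_, fun hlt => ?_⟩
    · have hzlt : zOf μ β < ld := by
        have := zOf_lt_zOf hμ0 hμ1 hlt hβd1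
        rwa [hzβd] at this
      exact sub_pos.mpr (hs3.1 hzlt)
    · rw [heq]
      show Fs fh s (zOf μ βd) - Fs fl s (zOf μ βd) = 0
      rw [hzβd]; exact hEq0
    · have hzlt : ld < zOf μ β := by
        have := zOf_lt_zOf hμ0 hμ1 hlt hβ2
        rwa [hzβd] at this
      exact sub_neg.mpr (hs3.2.2 hzlt)
  refine ⟨βd, ⟨⟨betaOf_lt_betaOf hμ0 hμ1 hal0 hldo.1,
    betaOf_lt_betaOf hμ0 hμ1 hld0 hldo.2⟩, key⟩, ?_⟩
  intro y hy
  have hβdah : betaOf μ a_h < βd := betaOf_lt_betaOf hμ0 hμ1 hah0 hldah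
  have hβdbh : ((zOf μ βd : ℝ) : EReal) < b_h := by rw [hzβd]; exact hldbh
  have hval : H fh μ s βd - H fl μ s βd = 0 := by
    show Fs fh s (zOf μ βd) - Fs fl s (zOf μ βd) = 0
    rw [hzβd]; exact hEq0
  have htri := hy.2 βd hβdah hβd1 hβdbh
  rcases lt_trichotomy βd y with hc | hc | hc
  · have := htri.1 hc; rw [hval] at this; exact absurd this (lt_irrefl 0)
  · exact hc.symm
  · have := htri.2.2 hc; rw [hval] at this; exact absurd this (lt_irrefl 0)
end

section
/- Let f_h and f_l be likelihood-ratio experiments on [a_h,b_h] and [a_l,b_l] (0 ≤ a_h < a_l < b_l < b_h ≤ ∞), with state-s CDFs F_{t,s}. Fix p ∈ (0,1), μ ∈ [1/2,1), and β ∈ (0,1/2], and set z = (1−μ)β/(μ(1−β)). If z ∈ (a_l, b_l), then p·F_{h,0}(z) + (1−p)·F_{l,0}(z) > (μ/(1−μ))·( p·F_{h,1}(z) + (1−p)·F_{l,1}(z) ). -/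
open MeasureTheory Set

lemma lr_nonneg {f : ℝ → ℝ} {a : ℝ} {b : EReal} (h : IsLRExperiment f a b) :
    ∀ x, 0 ≤ f x := by
  intro x
  rcases lt_trichotomy x a with hx | hx | hx
  · exact (h.zero_outside x (Or.inl hx)).ge
  · -- x = a : left limit of zeros
    subst hx
    have h1 : Filter.Tendsto f (nhdsWithin x (Iio x)) (nhds (f x)) :=
      (h.cont.continuousAt).continuousWithinAt.tendsto
    have h2 : Filter.Tendsto f (nhdsWithin x (Iio x)) (nhds 0) := by
      refine Filter.Tendsto.congr' ?_ tendsto_const_nhds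
      filter_upwards [self_mem_nhdsWithin] with y hy
      exact (h.zero_outside y (Or.inl hy)).symm
    exact (tendsto_nhds_unique h2 h1).le
  · rcases lt_trichotomy (x : EReal) b with hb | hb | hb
    · exact (h.pos x hx hb).le
    · -- x = b : right limit of zeros
      have h1 : Filter.Tendsto f (nhdsWithin x (Ioi x)) (nhds (f x)) :=
        (h.cont.continuousAt).continuousWithinAt.tendsto
      have h2 : Filter.Tendsto f (nhdsWithin x (Ioi x)) (nhds 0) := by
        refine Filter.Tendsto.congr' ?_ tendsto_const_nhds
        filter_upwards [self_mem_nhdsWithin] with y hy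
        refine (h.zero_outside y (Or.inr ?_)).symm
        rw [← hb]
        exact_mod_cast hy
      exact (tendsto_nhds_unique h2 h1).le
    · exact (h.zero_outside x (Or.inr hb)).ge

lemma F0_nonneg {f : ℝ → ℝ} {a : ℝ} {b : EReal} (h : IsLRExperiment f a b)
    {z : ℝ} (hz : 0 ≤ z) : 0 ≤ F0 f z := by
  exact intervalIntegral.integral_nonneg hz fun u _ => lr_nonneg h u

lemma F1_le {f : ℝ → ℝ} {a : ℝ} {b : EReal} (h : IsLRExperiment f a b)
    {z : ℝ} (hz : 0 ≤ z) : F1 f z ≤ z * F0 f z := by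
  unfold F1 F0
  rw [← intervalIntegral.integral_const_mul]
  refine intervalIntegral.integral_mono_on hz ?_ ?_ ?_
  · exact (continuous_id.mul h.cont).intervalIntegrable 0 z
  · exact (continuous_const.mul h.cont).intervalIntegrable 0 z
  · intro u hu
    exact mul_le_mul_of_nonneg_right hu.2 (lr_nonneg h u)

/-- After a contrarian report under a belief cutoff `β ≤ 1/2`, the receiver's posterior
odds of state 0 strictly exceed `μ/(1−μ)`: with `z = (1−μ)β/(μ(1−β))`, if `z ∈ (a_l,b_l)`
then `p·F_{h,0}(z) + (1−p)·F_{l,0}(z) > (μ/(1−μ))·(p·F_{h,1}(z) + (1−p)·F_{l,1}(z))`. -/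
theorem stmt_11 (fh fl : ℝ → ℝ) (a_h a_l b_l : ℝ) (b_h : EReal)
    (hh : IsLRExperiment fh a_h b_h) (hl : IsLRExperiment fl a_l (b_l : EReal))
    (hab : a_h < a_l) (hbb : (b_l : EReal) < b_h)
    (p : ℝ) (hp : p ∈ Set.Ioo (0:ℝ) 1)
    (μ : ℝ) (hμ : μ ∈ Set.Ico (1/2 : ℝ) 1)
    (β : ℝ) (hβ : β ∈ Set.Ioc (0:ℝ) (1/2)) :
    ∀ z : ℝ, z = (1 - μ) * β / (μ * (1 - β)) → a_l < z → z < b_l →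
      p * F0 fh z + (1 - p) * F0 fl z
        > μ / (1 - μ) * (p * F1 fh z + (1 - p) * F1 fl z) := by
  intro z hz hz1 hz2
  obtain ⟨hp0, hp1⟩ := hp
  obtain ⟨hμ1, hμ2⟩ := hμ
  obtain ⟨hβ1, hβ2⟩ := hβ
  have hμ0 : 0 < μ := lt_of_lt_of_le (by norm_num) hμ1
  have h1μ : 0 < 1 - μ := by linarith
  have h1β : 0 < 1 - β := by linarith
  have hz0 : 0 < z := lt_of_le_of_lt hl.a_nonneg hz1
  -- strict inequality for the l-experiment
  have key_l : F1 fl z < z * F0 fl z := by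
    unfold F1 F0
    rw [← intervalIntegral.integral_const_mul]
    refine intervalIntegral.integral_lt_integral_of_continuousOn_of_le_of_exists_lt hz0
      (continuous_id.mul hl.cont).continuousOn (continuous_const.mul hl.cont).continuousOn
      (fun u hu => mul_le_mul_of_nonneg_right hu.2 (lr_nonneg hl u)) ?_
    refine ⟨(a_l + z) / 2, ⟨by linarith [hl.a_nonneg], by linarith⟩, ?_⟩
    have hw1 : a_l < (a_l + z) / 2 := by linarith
    have hw2 : (a_l + z) / 2 < z := by linarith
    have hpos : 0 < fl ((a_l + z) / 2) := by
      refine hl.pos _ hw1 ?_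
      exact_mod_cast lt_trans hw2 hz2
    exact mul_lt_mul_of_pos_right hw2 hpos
  have key_h : F1 fh z ≤ z * F0 fh z := F1_le hh hz0.le
  have F0h : 0 ≤ F0 fh z := F0_nonneg hh hz0.le
  have F0l : 0 ≤ F0 fl z := F0_nonneg hl hz0.le
  have hc : 0 < μ / (1 - μ) := div_pos hμ0 h1μ
  have hcz : μ / (1 - μ) * z = β / (1 - β) := by
    rw [hz]; field_simp
  have hcz1 : μ / (1 - μ) * z ≤ 1 := by
    rw [hcz]
    rw [div_le_one h1β]; linarith
  have step1 : μ / (1 - μ) * (p * F1 fh z + (1 - p) * F1 fl z)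
      < μ / (1 - μ) * z * (p * F0 fh z + (1 - p) * F0 fl z) := by
    have h1 : p * F1 fh z ≤ p * (z * F0 fh z) :=
      mul_le_mul_of_nonneg_left key_h hp0.le
    have h2 : (1 - p) * F1 fl z < (1 - p) * (z * F0 fl z) :=
      mul_lt_mul_of_pos_left key_l (by linarith)
    have := add_lt_add_of_le_of_lt h1 h2
    calc μ / (1 - μ) * (p * F1 fh z + (1 - p) * F1 fl z)
        < μ / (1 - μ) * (p * (z * F0 fh z) + (1 - p) * (z * F0 fl z)) :=
          mul_lt_mul_of_pos_left this hc
      _ = μ / (1 - μ) * z * (p * F0 fh z + (1 - p) * F0 fl z) := by ring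
  have step2 : μ / (1 - μ) * z * (p * F0 fh z + (1 - p) * F0 fl z)
      ≤ p * F0 fh z + (1 - p) * F0 fl z := by
    have hnn : (0:ℝ) ≤ p * F0 fh z + (1 - p) * F0 fl z :=
      add_nonneg (mul_nonneg hp0.le F0h) (mul_nonneg (by linarith) F0l)
    nlinarith [mul_le_mul_of_nonneg_right hcz1 hnn]
  exact lt_of_lt_of_le step1 step2
end

section
/- Let g₀, g₁ : [0,1] → ℝ be continuous and positive, with G_s(y) = ∫₀^y g_s(u) du satisfying G₀(1) = G₁(1) = 1, and suppose λ(y) = g₁(y)/g₀(y) is strictly increasing on [0,1]. Assume the symmetry condition G₀(y) = 1 − G₁(1−y) for all y ∈ [0,1]. Define F_s(ℓ) = G_s(λ⁻¹(ℓ)) for ℓ ∈ [λ(0), λ(1)]. Then λ(0)·λ(1) = 1, λ(1−y) = 1/λ(y) for all y ∈ [0,1], and F₀(ℓ) = 1 − F₁(1/ℓ) for all ℓ ∈ [λ(0), λ(1)]. -/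
open MeasureTheory Set

/-- Under the monotone likelihood ratio property, mirror-image symmetry of the signal
distributions (`G₀(y) = 1 − G₁(1−y)`) translates into the likelihood-ratio form of
symmetry: `λ(0)·λ(1) = 1`, `λ(1−y) = 1/λ(y)`, and `F₀(ℓ) = 1 − F₁(1/ℓ)` where
`F_s(ℓ) = G_s(λ⁻¹(ℓ))` is the induced CDF of the likelihood ratio `ℓ`. -/
theorem stmt_12 (g0 g1 : ℝ → ℝ)
    (hg0c : ContinuousOn g0 (Icc 0 1)) (hg1c : ContinuousOn g1 (Icc 0 1))
    (hg0p : ∀ y ∈ Icc (0:ℝ) 1, 0 < g0 y) (hg1p : ∀ y ∈ Icc (0:ℝ) 1, 0 < g1 y)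
    (G0 G1 : ℝ → ℝ)
    (hG0 : ∀ y : ℝ, G0 y = ∫ u in (0:ℝ)..y, g0 u)
    (hG1 : ∀ y : ℝ, G1 y = ∫ u in (0:ℝ)..y, g1 u)
    (hG0one : G0 1 = 1) (hG1one : G1 1 = 1)
    (lam : ℝ → ℝ) (hlam : ∀ y : ℝ, lam y = g1 y / g0 y)
    (hmono : StrictMonoOn lam (Icc 0 1))
    (hsym : ∀ y ∈ Icc (0:ℝ) 1, G0 y = 1 - G1 (1 - y))
    (laminv : ℝ → ℝ)
    (hinv1 : ∀ y ∈ Icc (0:ℝ) 1, laminv (lam y) = y)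
    (hinv2 : ∀ ℓ ∈ Icc (lam 0) (lam 1),
      laminv ℓ ∈ Icc (0:ℝ) 1 ∧ lam (laminv ℓ) = ℓ) :
    lam 0 * lam 1 = 1 ∧
    (∀ y ∈ Icc (0:ℝ) 1, lam (1 - y) = 1 / lam y) ∧
    (∀ ℓ ∈ Icc (lam 0) (lam 1), G0 (laminv ℓ) = 1 - G1 (laminv (1 / ℓ))) := by
  -- Step 1: key density symmetry on the interior: g0 y = g1 (1 - y).
  have keyInt : ∀ y ∈ Ioo (0:ℝ) 1, g0 y = g1 (1 - y) := by
    intro y hy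
    have hnbd : Icc (0:ℝ) 1 ∈ nhds y := Icc_mem_nhds hy.1 hy.2
    have hnbd' : Icc (0:ℝ) 1 ∈ nhds (1 - y) :=
      Icc_mem_nhds (by linarith [hy.2]) (by linarith [hy.1])
    -- derivative of G0 at y is g0 y
    have hint0 : IntervalIntegrable g0 volume 0 y :=
      ContinuousOn.intervalIntegrable
        (hg0c.mono (by rw [uIcc_of_le hy.1.le]; exact Icc_subset_Icc le_rfl hy.2.le))
    have hd0 : HasDerivAt G0 (g0 y) y := by
      have h := intervalIntegral.integral_hasDerivAt_right hint0
        ⟨Icc 0 1, hnbd, hg0c.aestronglyMeasurable measurableSet_Icc⟩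
        (hg0c.continuousAt hnbd)
      exact h.congr_of_eventuallyEq (Filter.Eventually.of_forall fun x => (hG0 x))
    -- derivative of G1 at 1 - y is g1 (1 - y)
    have hint1 : IntervalIntegrable g1 volume 0 (1 - y) :=
      ContinuousOn.intervalIntegrable
        (hg1c.mono (by
          rw [uIcc_of_le (by linarith [hy.2] : (0:ℝ) ≤ 1 - y)]
          exact Icc_subset_Icc le_rfl (by linarith [hy.1])))
    have hd1 : HasDerivAt G1 (g1 (1 - y)) (1 - y) := by
      have h := intervalIntegral.integral_hasDerivAt_right hint1
        ⟨Icc 0 1, hnbd', hg1c.aestronglyMeasurable measurableSet_Icc⟩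
        (hg1c.continuousAt hnbd')
      exact h.congr_of_eventuallyEq (Filter.Eventually.of_forall fun x => (hG1 x))
    -- derivative of y ↦ 1 - G1 (1 - y) at y is g1 (1 - y)
    have hdF : HasDerivAt (fun x => 1 - G1 (1 - x)) (g1 (1 - y)) y := by
      have hlin : HasDerivAt (fun x : ℝ => 1 - x) (-1 : ℝ) y := by
        simpa using (hasDerivAt_id y).const_sub 1
      have hc : HasDerivAt (fun x => G1 (1 - x)) (g1 (1 - y) * (-1)) y :=
        HasDerivAt.comp y hd1 hlin
      have := hc.const_sub 1
      simpa using this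
    -- G0 = that function near y
    have heq : G0 =ᶠ[nhds y] (fun x => 1 - G1 (1 - x)) := by
      filter_upwards [hnbd] with x hx
      exact hsym x hx
    have hd0' : HasDerivAt (fun x => 1 - G1 (1 - x)) (g0 y) y :=
      hd0.congr_of_eventuallyEq heq.symm
    exact hd0'.unique hdF
  -- Step 2: extend to the closed interval by continuity.
  have key : ∀ y ∈ Icc (0:ℝ) 1, g0 y = g1 (1 - y) := by
    intro y hy
    rcases eq_or_lt_of_le hy.1 with h0 | h0
    · -- y = 0 : take limit from the right along Ioo 0 1
      subst h0
      have hne : (nhdsWithin (0:ℝ) (Ioo (0:ℝ) 1)).NeBot := by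
        rw [← mem_closure_iff_nhdsWithin_neBot, closure_Ioo (by norm_num : (0:ℝ) ≠ 1)]
        exact ⟨le_rfl, by norm_num⟩
      have h1 : Filter.Tendsto g0 (nhdsWithin (0:ℝ) (Ioo 0 1)) (nhds (g0 0)) :=
        ((hg0c 0 hy).mono Ioo_subset_Icc_self).tendsto
      have h2 : Filter.Tendsto (fun x => g1 (1 - x)) (nhdsWithin (0:ℝ) (Ioo 0 1))
          (nhds (g1 1)) := by
        have hc : ContinuousWithinAt (fun x => g1 (1 - x)) (Icc 0 1) 0 := by
          apply ContinuousWithinAt.comp (f := fun x : ℝ => 1 - x)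
            (g := g1) (t := Icc (0:ℝ) 1)
          · simpa using (hg1c 1 (by norm_num)).mono (subset_refl _)
          · exact (continuous_const.sub continuous_id).continuousWithinAt
          · intro x hx; simp only [mem_Icc] at hx ⊢; constructor <;> linarith
        simpa using (hc.mono Ioo_subset_Icc_self).tendsto
      have h2' : Filter.Tendsto g0 (nhdsWithin (0:ℝ) (Ioo 0 1)) (nhds (g1 1)) := by
        apply h2.congr'
        filter_upwards [self_mem_nhdsWithin] with x hx
        exact (keyInt x hx).symm
      simpa using tendsto_nhds_unique h1 h2'
    rcases eq_or_lt_of_le hy.2 with h1 | h1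
    · -- y = 1 : take limit from the left
      subst h1
      have hne : (nhdsWithin (1:ℝ) (Ioo (0:ℝ) 1)).NeBot := by
        rw [← mem_closure_iff_nhdsWithin_neBot, closure_Ioo (by norm_num : (0:ℝ) ≠ 1)]
        exact ⟨by norm_num, le_rfl⟩
      have ha : Filter.Tendsto g0 (nhdsWithin (1:ℝ) (Ioo 0 1)) (nhds (g0 1)) :=
        ((hg0c 1 hy).mono Ioo_subset_Icc_self).tendsto
      have hb : Filter.Tendsto (fun x => g1 (1 - x)) (nhdsWithin (1:ℝ) (Ioo 0 1))
          (nhds (g1 0)) := by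
        have hc : ContinuousWithinAt (fun x => g1 (1 - x)) (Icc 0 1) 1 := by
          apply ContinuousWithinAt.comp (f := fun x : ℝ => 1 - x)
            (g := g1) (t := Icc (0:ℝ) 1)
          · simpa using (hg1c 0 (by norm_num)).mono (subset_refl _)
          · exact (continuous_const.sub continuous_id).continuousWithinAt
          · intro x hx; simp only [mem_Icc] at hx ⊢; constructor <;> linarith
        simpa using (hc.mono Ioo_subset_Icc_self).tendsto
      have hb' : Filter.Tendsto g0 (nhdsWithin (1:ℝ) (Ioo 0 1)) (nhds (g1 0)) := by
        apply hb.congr'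
        filter_upwards [self_mem_nhdsWithin] with x hx
        exact (keyInt x hx).symm
      simpa using tendsto_nhds_unique ha hb'
    · exact keyInt y ⟨h0, h1⟩
  -- Step 3: lam (1 - y) = 1 / lam y on [0,1].
  have part2 : ∀ y ∈ Icc (0:ℝ) 1, lam (1 - y) = 1 / lam y := by
    intro y hy
    have hy' : (1 - y) ∈ Icc (0:ℝ) 1 := ⟨by linarith [hy.2], by linarith [hy.1]⟩
    have e1 : g0 (1 - y) = g1 y := by
      have := key (1 - y) hy'
      simpa using this
    have e2 : g0 y = g1 (1 - y) := key y hy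
    rw [hlam, hlam, ← e2, e1, one_div_div]
  have hlam0pos : 0 < lam 0 := by
    rw [hlam]
    exact div_pos (hg1p 0 (by norm_num)) (hg0p 0 (by norm_num))
  refine ⟨?_, part2, ?_⟩
  · -- lam 0 * lam 1 = 1
    have := part2 0 (by norm_num)
    simp only [sub_zero] at this
    rw [this]
    field_simp
  · -- F₀(ℓ) = 1 − F₁(1/ℓ)
    intro ℓ hℓ
    obtain ⟨hyIcc, hylam⟩ := hinv2 ℓ hℓ
    set y := laminv ℓ with hydef
    have hℓpos : 0 < ℓ := lt_of_lt_of_le hlam0pos hℓ.1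
    have hy' : (1 - y) ∈ Icc (0:ℝ) 1 := ⟨by linarith [hyIcc.2], by linarith [hyIcc.1]⟩
    have h1y : lam (1 - y) = 1 / ℓ := by rw [part2 y hyIcc, hylam]
    have hinv : laminv (1 / ℓ) = 1 - y := by
      rw [← h1y]; exact hinv1 (1 - y) hy'
    rw [hinv]
    exact hsym y hyIcc
end

section
/- For each integer k ≥ 1, set b_k = k/(k² − k + 1), f_k(ℓ) = (1−1/k)·k·e^{−kℓ} + (1/k)·b_k·e^{−b_k ℓ}, F_k(ℓ) = ∫₀^ℓ f_k(u) du, and T_k(ℓ) = ∫₀^ℓ u·f_k(u) du. Then for every ℓ > 0: (i) f_k(ℓ)/(1−F_k(ℓ)) ≤ (k² − k)·e^{(b_k − k)ℓ} + b_k for every k ≥ 1; and (ii) as k → ∞, each of f_k(ℓ)/(1−F_k(ℓ)), f_k(ℓ)/F_k(ℓ), ℓ·f_k(ℓ)/T_k(ℓ), and ℓ·f_k(ℓ)/(1−T_k(ℓ)) converges to 0. -/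
open MeasureTheory Set

/-- The small exponential rate `b_k = k/(k² − k + 1)` of the hyperexponential
experiment. -/
noncomputable def bHE (k : ℕ) : ℝ := (k : ℝ) / ((k : ℝ)^2 - (k : ℝ) + 1)

/-- State-0 density of the simple hyperexponential experiment of parameter `k`:
`f_k(ℓ) = (1 − 1/k)·k·e^{−kℓ} + (1/k)·b_k·e^{−b_k ℓ}`. -/
noncomputable def fHE (k : ℕ) (ℓ : ℝ) : ℝ :=
  (1 - 1/(k : ℝ)) * (k : ℝ) * Real.exp (-(k : ℝ) * ℓ)
    + (1/(k : ℝ)) * bHE k * Real.exp (-(bHE k) * ℓ)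

/-- State-0 CDF of the hyperexponential experiment. -/
noncomputable def FHE (k : ℕ) (ℓ : ℝ) : ℝ := ∫ u in (0:ℝ)..ℓ, fHE k u

/-- State-1 CDF of the hyperexponential experiment. -/
noncomputable def THE (k : ℕ) (ℓ : ℝ) : ℝ := ∫ u in (0:ℝ)..ℓ, u * fHE k u

open Filter

/- ### Auxiliary lemmas -/

lemma bden_pos (k : ℕ) : (0:ℝ) < (k:ℝ)^2 - (k:ℝ) + 1 := by
  nlinarith [sq_nonneg ((k:ℝ) - 1/2)]

lemma bHE_pos {k : ℕ} (hk : 1 ≤ k) : 0 < bHE k := by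
  have : (0:ℝ) < (k:ℝ) := by exact_mod_cast hk
  exact div_pos this (bden_pos k)

lemma bHE_nonneg (k : ℕ) : 0 ≤ bHE k :=
  div_nonneg (Nat.cast_nonneg k) (bden_pos k).le

lemma intExpNeg (a x : ℝ) (ha : a ≠ 0) :
    ∫ u in (0:ℝ)..x, Real.exp (-a * u) = (1 - Real.exp (-a * x)) / a := by
  have hd : ∀ u ∈ Set.uIcc (0:ℝ) x,
      HasDerivAt (fun u => -(Real.exp (-a * u)) / a) (Real.exp (-a * u)) u := by
    intro u _
    have h1 : HasDerivAt (fun u : ℝ => -a * u) (-a) u := by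
      simpa using (hasDerivAt_id u).const_mul (-a)
    have h2 : HasDerivAt (fun u => -(Real.exp (-a * u)) / a) (-(Real.exp (-a * u) * -a) / a) u :=
      ((h1.exp).neg).div_const a
    convert h2 using 1
    field_simp
  have hi : IntervalIntegrable (fun u => Real.exp (-a * u)) volume 0 x :=
    (Real.continuous_exp.comp (continuous_const.mul continuous_id)).intervalIntegrable _ _
  rw [intervalIntegral.integral_eq_sub_of_hasDerivAt hd hi]
  simp [mul_comm]
  ring

lemma intMulExpNeg (a x : ℝ) (ha : a ≠ 0) :
    ∫ u in (0:ℝ)..x, u * Real.exp (-a * u)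
      = (1 - (a * x + 1) * Real.exp (-a * x)) / a ^ 2 := by
  have hd : ∀ u ∈ Set.uIcc (0:ℝ) x,
      HasDerivAt (fun u => -((a * u + 1) * Real.exp (-a * u)) / a ^ 2)
        (u * Real.exp (-a * u)) u := by
    intro u _
    have h1 : HasDerivAt (fun u : ℝ => -a * u) (-a) u := by
      simpa using (hasDerivAt_id u).const_mul (-a)
    have hlin : HasDerivAt (fun u : ℝ => a * u + 1) a u := by
      simpa using ((hasDerivAt_id u).const_mul a).add_const 1
    have h2 : HasDerivAt (fun u => -((a * u + 1) * Real.exp (-a * u)) / a ^ 2)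
        (-(a * Real.exp (-a * u) + (a * u + 1) * (Real.exp (-a * u) * -a)) / a ^ 2) u :=
      ((hlin.mul h1.exp).neg).div_const (a ^ 2)
    convert h2 using 1
    field_simp
    ring
  have hi : IntervalIntegrable (fun u => u * Real.exp (-a * u)) volume 0 x :=
    (continuous_id.mul (Real.continuous_exp.comp (continuous_const.mul continuous_id))).intervalIntegrable _ _
  rw [intervalIntegral.integral_eq_sub_of_hasDerivAt hd hi]
  field_simp
  simp only [mul_zero, neg_zero, Real.exp_zero]
  ring

lemma FHE_eq {k : ℕ} (hk : 1 ≤ k) (ℓ : ℝ) :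
    FHE k ℓ = (1 - 1/(k:ℝ)) * (1 - Real.exp (-(k:ℝ) * ℓ))
      + (1/(k:ℝ)) * (1 - Real.exp (-(bHE k) * ℓ)) := by
  have hk0 : (k:ℝ) ≠ 0 := by positivity
  have hb0 : bHE k ≠ 0 := (bHE_pos hk).ne'
  have hi1 : IntervalIntegrable (fun u => Real.exp (-(k:ℝ) * u)) volume 0 ℓ :=
    (Real.continuous_exp.comp (continuous_const.mul continuous_id)).intervalIntegrable _ _
  have hi2 : IntervalIntegrable (fun u => Real.exp (-(bHE k) * u)) volume 0 ℓ :=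
    (Real.continuous_exp.comp (continuous_const.mul continuous_id)).intervalIntegrable _ _
  rw [FHE]
  simp only [fHE]
  rw [intervalIntegral.integral_add ((hi1.const_mul _)) ((hi2.const_mul _)),
    intervalIntegral.integral_const_mul, intervalIntegral.integral_const_mul,
    intExpNeg _ _ hk0, intExpNeg _ _ hb0]
  field_simp

lemma THE_eq {k : ℕ} (hk : 1 ≤ k) (ℓ : ℝ) :
    THE k ℓ = (1 - 1/(k:ℝ)) * (1 - ((k:ℝ) * ℓ + 1) * Real.exp (-(k:ℝ) * ℓ)) * (1/(k:ℝ))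
      + (1 - (bHE k * ℓ + 1) * Real.exp (-(bHE k) * ℓ)) * (1/((k:ℝ) * bHE k)) := by
  have hk0 : (k:ℝ) ≠ 0 := by positivity
  have hb : 0 < bHE k := bHE_pos hk
  have hi1 : IntervalIntegrable (fun u => u * Real.exp (-(k:ℝ) * u)) volume 0 ℓ :=
    (continuous_id.mul (Real.continuous_exp.comp (continuous_const.mul continuous_id))).intervalIntegrable _ _
  have hi2 : IntervalIntegrable (fun u => u * Real.exp (-(bHE k) * u)) volume 0 ℓ :=
    (continuous_id.mul (Real.continuous_exp.comp (continuous_const.mul continuous_id))).intervalIntegrable _ _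
  rw [THE]
  have : ∀ u : ℝ, u * fHE k u
      = (1 - 1/(k : ℝ)) * (k : ℝ) * (u * Real.exp (-(k : ℝ) * u))
        + (1/(k : ℝ)) * bHE k * (u * Real.exp (-(bHE k) * u)) := by
    intro u; rw [fHE]; ring
  simp only [this]
  rw [intervalIntegral.integral_add ((hi1.const_mul _)) ((hi2.const_mul _)),
    intervalIntegral.integral_const_mul, intervalIntegral.integral_const_mul,
    intMulExpNeg _ _ hk0, intMulExpNeg _ _ hb.ne']
  field_simp

lemma one_sub_exp_nonneg {x : ℝ} (hx : 0 ≤ x) : 0 ≤ 1 - (x + 1) * Real.exp (-x) := by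
  rcases eq_or_lt_of_le hx with h | h
  · simp [← h]
  · have h1 : x + 1 < Real.exp x := Real.add_one_lt_exp h.ne'
    have h2 : (x + 1) * Real.exp (-x) < 1 := by
      rw [Real.exp_neg]
      rw [mul_inv_lt_iff₀ (Real.exp_pos x)]
      simpa using h1
    linarith

lemma one_sub_exp_pos {x : ℝ} (hx : 0 < x) : 0 < 1 - (x + 1) * Real.exp (-x) := by
  have h1 : x + 1 < Real.exp x := Real.add_one_lt_exp hx.ne'
  have h2 : (x + 1) * Real.exp (-x) < 1 := by
    rw [Real.exp_neg, mul_inv_lt_iff₀ (Real.exp_pos x)]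
    simpa using h1
  linarith

lemma fHE_nonneg {k : ℕ} (hk : 1 ≤ k) (ℓ : ℝ) : 0 ≤ fHE k ℓ := by
  have hk1 : (1:ℝ) ≤ (k:ℝ) := by exact_mod_cast hk
  have h1 : (0:ℝ) ≤ 1 - 1/(k:ℝ) := by
    rw [sub_nonneg, div_le_one (by linarith)]; linarith
  have hb := bHE_nonneg k
  have hk0 : (0:ℝ) ≤ (k:ℝ) := by linarith
  rw [fHE]
  have e1 := (Real.exp_pos (-(k:ℝ) * ℓ)).le
  have e2 := (Real.exp_pos (-(bHE k) * ℓ)).le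
  positivity

lemma oneSubF_eq {k : ℕ} (hk : 1 ≤ k) (ℓ : ℝ) :
    1 - FHE k ℓ = (1 - 1/(k:ℝ)) * Real.exp (-(k:ℝ) * ℓ)
      + (1/(k:ℝ)) * Real.exp (-(bHE k) * ℓ) := by
  have hk0 : (k:ℝ) ≠ 0 := by positivity
  rw [FHE_eq hk]
  field_simp
  ring

lemma haz_bound (ℓ : ℝ) {k : ℕ} (hk : 1 ≤ k) :
    fHE k ℓ / (1 - FHE k ℓ)
      ≤ ((k : ℝ)^2 - (k : ℝ)) * Real.exp ((bHE k - (k : ℝ)) * ℓ) + bHE k := by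
  have hk1 : (1:ℝ) ≤ (k:ℝ) := by exact_mod_cast hk
  have hk0 : (k:ℝ) ≠ 0 := by positivity
  have h1 : (0:ℝ) ≤ 1 - 1/(k:ℝ) := by
    rw [sub_nonneg, div_le_one (by linarith)]; linarith
  have hd_pos : 0 < (1/(k:ℝ)) * Real.exp (-(bHE k) * ℓ) := by positivity
  have hdD : (1/(k:ℝ)) * Real.exp (-(bHE k) * ℓ) ≤ 1 - FHE k ℓ := by
    rw [oneSubF_eq hk]
    have := mul_nonneg h1 (Real.exp_pos (-(k:ℝ) * ℓ)).le
    linarith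
  have hEid : Real.exp ((bHE k - (k:ℝ)) * ℓ) * Real.exp (-(bHE k) * ℓ)
      = Real.exp (-(k:ℝ) * ℓ) := by
    rw [← Real.exp_add]; ring_nf
  calc fHE k ℓ / (1 - FHE k ℓ)
      ≤ fHE k ℓ / ((1/(k:ℝ)) * Real.exp (-(bHE k) * ℓ)) :=
        div_le_div_of_nonneg_left (fHE_nonneg hk ℓ) hd_pos hdD
    _ = ((k : ℝ)^2 - (k : ℝ)) * Real.exp ((bHE k - (k : ℝ)) * ℓ) + bHE k := by
        rw [div_eq_iff hd_pos.ne', fHE, ← hEid]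
        field_simp

/- ### Tendsto helpers -/

lemma hE_lim {ℓ : ℝ} (hℓ : 0 < ℓ) :
    Tendsto (fun k : ℕ => Real.exp (-(k:ℝ) * ℓ)) atTop (nhds 0) := by
  have h1 : Tendsto (fun k : ℕ => (k:ℝ) * ℓ) atTop atTop :=
    (tendsto_natCast_atTop_atTop).atTop_mul_const hℓ
  have h2 : Tendsto (fun k : ℕ => -((k:ℝ) * ℓ)) atTop atBot :=
    tendsto_neg_atTop_atBot.comp h1
  refine (Real.tendsto_exp_atBot.comp h2).congr fun k => ?_
  simp [Function.comp, neg_mul]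

lemma hpow_lim {ℓ : ℝ} (hℓ : 0 < ℓ) (n : ℕ) :
    Tendsto (fun k : ℕ => (k:ℝ)^n * Real.exp (-(k:ℝ) * ℓ)) atTop (nhds 0) := by
  have h1 : Tendsto (fun k : ℕ => (k:ℝ) * ℓ) atTop atTop :=
    (tendsto_natCast_atTop_atTop).atTop_mul_const hℓ
  have h2 := (Real.tendsto_pow_mul_exp_neg_atTop_nhds_zero n).comp h1
  have h3 := h2.const_mul ((1:ℝ)/ℓ^n)
  rw [mul_zero] at h3
  refine h3.congr fun k => ?_
  simp only [Function.comp]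
  rw [mul_pow]
  field_simp

lemma hb_lim : Tendsto (fun k : ℕ => bHE k) atTop (nhds 0) := by
  apply squeeze_zero' (Eventually.of_forall fun k => bHE_nonneg k)
    (Eventually.of_forall fun k => ?_) (tendsto_const_div_atTop_nhds_zero_nat 2)
  rcases Nat.eq_zero_or_pos k with h | h
  · simp [h, bHE]
  · have hk : (0:ℝ) < (k:ℝ) := by exact_mod_cast h
    rw [bHE, div_le_div_iff₀ (bden_pos k) hk]
    nlinarith [sq_nonneg ((k:ℝ) - 1)]

lemma hkb_lim : Tendsto (fun k : ℕ => (k:ℝ) * bHE k) atTop (nhds 1) := by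
  have h1 : Tendsto (fun k : ℕ => 1 - 1/(k:ℝ) + (1/(k:ℝ)) * (1/(k:ℝ))) atTop (nhds 1) := by
    have := ((tendsto_const_nhds (x := (1:ℝ)) (f := atTop)).sub
      tendsto_one_div_atTop_nhds_zero_nat).add
      (tendsto_one_div_atTop_nhds_zero_nat.mul tendsto_one_div_atTop_nhds_zero_nat)
    simpa using this
  have h2 : Tendsto (fun k : ℕ => (1 - 1/(k:ℝ) + (1/(k:ℝ)) * (1/(k:ℝ)))⁻¹) atTop (nhds 1) := by
    simpa using h1.inv₀ one_ne_zero
  apply h2.congr'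
  filter_upwards [eventually_ge_atTop 1] with k hk
  have hk0 : (k:ℝ) ≠ 0 := by positivity
  have hden : ((k:ℝ)^2 - (k:ℝ) + 1) ≠ 0 := (bden_pos k).ne'
  rw [bHE]
  have hx : 1 - 1/(k:ℝ) + (1/(k:ℝ)) * (1/(k:ℝ)) = ((k:ℝ)^2 - (k:ℝ) + 1)/(k:ℝ)^2 := by
    field_simp
  rw [hx, inv_div]
  ring

/-- The hazard rate of the hyperexponential experiment in state 0 is bounded by
`(k² − k)e^{(b_k − k)ℓ} + b_k`, and all four hazard/reverse-hazard rates (in states 0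
and 1) vanish pointwise as `k → ∞`. -/
theorem stmt_17 (ℓ : ℝ) (hℓ : 0 < ℓ) :
    (∀ k : ℕ, 1 ≤ k →
      fHE k ℓ / (1 - FHE k ℓ)
        ≤ ((k : ℝ)^2 - (k : ℝ)) * Real.exp ((bHE k - (k : ℝ)) * ℓ) + bHE k) ∧
    Filter.Tendsto (fun k : ℕ => fHE k ℓ / (1 - FHE k ℓ)) Filter.atTop (nhds 0) ∧
    Filter.Tendsto (fun k : ℕ => fHE k ℓ / FHE k ℓ) Filter.atTop (nhds 0) ∧
    Filter.Tendsto (fun k : ℕ => ℓ * fHE k ℓ / THE k ℓ) Filter.atTop (nhds 0) ∧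
    Filter.Tendsto (fun k : ℕ => ℓ * fHE k ℓ / (1 - THE k ℓ)) Filter.atTop (nhds 0) := by
  -- basic tendsto facts
  have hE := hE_lim hℓ
  have hp1 : Tendsto (fun k : ℕ => (k:ℝ) * Real.exp (-(k:ℝ) * ℓ)) atTop (nhds 0) :=
    (hpow_lim hℓ 1).congr fun k => by rw [pow_one]
  have hp2 := hpow_lim hℓ 2
  have hinv : Tendsto (fun k : ℕ => 1/(k:ℝ)) atTop (nhds 0) :=
    tendsto_one_div_atTop_nhds_zero_nat
  have hone : Tendsto (fun _ : ℕ => (1:ℝ)) atTop (nhds 1) := tendsto_const_nhds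
  have h1k : Tendsto (fun k : ℕ => 1 - 1/(k:ℝ)) atTop (nhds 1) := by
    simpa using hone.sub hinv
  have hEb : Tendsto (fun k : ℕ => Real.exp (-(bHE k) * ℓ)) atTop (nhds 1) := by
    have h0 : Tendsto (fun k : ℕ => -(bHE k) * ℓ) atTop (nhds 0) := by
      simpa using (hb_lim.neg.mul_const ℓ)
    have := (Real.continuous_exp.tendsto 0).comp h0
    simpa [Function.comp_def, Real.exp_zero] using this
  have hexpb : Tendsto (fun k : ℕ => Real.exp (bHE k * ℓ)) atTop (nhds 1) := by
    have h0 : Tendsto (fun k : ℕ => bHE k * ℓ) atTop (nhds 0) := by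
      simpa using (hb_lim.mul_const ℓ)
    have := (Real.continuous_exp.tendsto 0).comp h0
    simpa [Function.comp_def, Real.exp_zero] using this
  -- f → 0
  have hf : Tendsto (fun k : ℕ => fHE k ℓ) atTop (nhds 0) := by
    have := (h1k.mul hp1).add ((hinv.mul hb_lim).mul hEb)
    rw [show (1:ℝ) * 0 + 0 * 0 * 1 = 0 by ring] at this
    refine this.congr fun k => ?_
    rw [fHE]; ring
  -- F → 1
  have hF : Tendsto (fun k : ℕ => FHE k ℓ) atTop (nhds 1) := by
    have h := (h1k.mul (hone.sub hE)).add (hinv.mul (hone.sub hEb))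
    rw [show (1:ℝ) * (1 - 0) + 0 * (1 - 1) = 1 by ring] at h
    refine h.congr' ?_
    filter_upwards [eventually_ge_atTop 1] with k hk
    exact (FHE_eq hk ℓ).symm
  -- (kℓ+1)e^{-kℓ} → 0
  have hklE : Tendsto (fun k : ℕ => ((k:ℝ) * ℓ + 1) * Real.exp (-(k:ℝ) * ℓ)) atTop (nhds 0) := by
    have := ((hp1.mul_const ℓ).add hE)
    rw [show (0:ℝ) * ℓ + 0 = 0 by ring] at this
    refine this.congr fun k => ?_
    ring
  -- (bℓ+1)e^{-bℓ} → 1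
  have hblE : Tendsto (fun k : ℕ => (bHE k * ℓ + 1) * Real.exp (-(bHE k) * ℓ)) atTop (nhds 1) := by
    have := ((hb_lim.mul_const ℓ).add hone).mul hEb
    rw [show ((0:ℝ) * ℓ + 1) * 1 = 1 by ring] at this
    exact this
  -- 1/(k b) → 1
  have hinvkb : Tendsto (fun k : ℕ => 1/((k:ℝ) * bHE k)) atTop (nhds 1) := by
    simpa [one_div] using hkb_lim.inv₀ one_ne_zero
  -- T → 0
  have hT : Tendsto (fun k : ℕ => THE k ℓ) atTop (nhds 0) := by
    have h := ((h1k.mul (hone.sub hklE)).mul hinv).add ((hone.sub hblE).mul hinvkb)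
    rw [show (1:ℝ) * (1 - 0) * 0 + (1 - 1) * 1 = 0 by ring] at h
    refine h.congr' ?_
    filter_upwards [eventually_ge_atTop 1] with k hk
    exact (THE_eq hk ℓ).symm
  -- ℓ f → 0
  have hlf : Tendsto (fun k : ℕ => ℓ * fHE k ℓ) atTop (nhds 0) := by
    simpa using hf.const_mul ℓ
  refine ⟨fun k hk => haz_bound ℓ hk, ?_, ?_, ?_, ?_⟩
  · -- hazard → 0, by squeeze with the bound
    have hg : Tendsto (fun k : ℕ =>
        ((k : ℝ)^2 - (k : ℝ)) * Real.exp ((bHE k - (k : ℝ)) * ℓ) + bHE k) atTop (nhds 0) := by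
      have h := ((hp2.sub hp1).mul hexpb).add hb_lim
      rw [show ((0:ℝ) - 0) * 1 + 0 = 0 by ring] at h
      refine h.congr fun k => ?_
      rw [show (bHE k - (k:ℝ)) * ℓ = bHE k * ℓ + -(k:ℝ) * ℓ by ring, Real.exp_add]
      ring
    refine squeeze_zero' ?_ ?_ hg
    · filter_upwards [eventually_ge_atTop 1] with k hk
      have hD : 0 ≤ 1 - FHE k ℓ := by
        rw [oneSubF_eq hk]
        have hk1 : (1:ℝ) ≤ (k:ℝ) := by exact_mod_cast hk
        have h1 : (0:ℝ) ≤ 1 - 1/(k:ℝ) := by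
          rw [sub_nonneg, div_le_one (by linarith)]; linarith
        have e1 := (Real.exp_pos (-(k:ℝ) * ℓ)).le
        have e2 := (Real.exp_pos (-(bHE k) * ℓ)).le
        positivity
      exact div_nonneg (fHE_nonneg hk ℓ) hD
    · filter_upwards [eventually_ge_atTop 1] with k hk
      exact haz_bound ℓ hk
  · -- reverse hazard → 0
    simpa [Pi.div_def] using hf.div hF one_ne_zero
  · -- ℓ f / T → 0, by squeeze
    have hgT : Tendsto (fun k : ℕ =>
        (ℓ * ((1 - 1/(k:ℝ)) * ((k:ℝ)^2 * Real.exp (-(k:ℝ) * ℓ))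
            + bHE k * Real.exp (-(bHE k) * ℓ)))
          / ((1 - 1/(k:ℝ)) * (1 - ((k:ℝ) * ℓ + 1) * Real.exp (-(k:ℝ) * ℓ)))) atTop (nhds 0) := by
      have hnum := (tendsto_const_nhds (x := ℓ) (f := atTop)).mul
        ((h1k.mul hp2).add (hb_lim.mul hEb))
      rw [show ℓ * ((1:ℝ) * 0 + 0 * 1) = 0 by ring] at hnum
      have hden := h1k.mul (hone.sub hklE)
      rw [show (1:ℝ) * (1 - 0) = 1 by ring] at hden
      simpa [Pi.div_def] using hnum.div hden one_ne_zero
    refine squeeze_zero' ?_ ?_ hgT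
    · filter_upwards [eventually_ge_atTop 1] with k hk
      have hk1 : (1:ℝ) ≤ (k:ℝ) := by exact_mod_cast hk
      have h1 : (0:ℝ) ≤ 1 - 1/(k:ℝ) := by
        rw [sub_nonneg, div_le_one (by linarith)]; linarith
      have hb := bHE_pos hk
      have hT0 : 0 ≤ THE k ℓ := by
        rw [THE_eq hk]
        have e1 := one_sub_exp_nonneg (x := (k:ℝ) * ℓ) (by positivity)
        have e2 := one_sub_exp_nonneg (x := bHE k * ℓ) (by positivity)
        rw [← neg_mul] at e1 e2
        have hk0 : (0:ℝ) < (k:ℝ) := by linarith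
        have : (0:ℝ) ≤ 1/((k:ℝ) * bHE k) := by positivity
        have : (0:ℝ) ≤ 1/(k:ℝ) := by positivity
        positivity
      exact div_nonneg (mul_nonneg hℓ.le (fHE_nonneg hk ℓ)) hT0
    · filter_upwards [eventually_ge_atTop 2] with k hk
      have hk1 : (2:ℝ) ≤ (k:ℝ) := by exact_mod_cast hk
      have hk' : 1 ≤ k := le_trans (by norm_num) hk
      have hk0 : (0:ℝ) < (k:ℝ) := by linarith
      have h1 : (0:ℝ) < 1 - 1/(k:ℝ) := by
        rw [sub_pos, div_lt_one hk0]; linarith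
      have hb := bHE_pos hk'
      have hxE : (0:ℝ) < 1 - ((k:ℝ) * ℓ + 1) * Real.exp (-(k:ℝ) * ℓ) := by
        have := one_sub_exp_pos (x := (k:ℝ) * ℓ) (by positivity)
        rwa [← neg_mul] at this
      set L : ℝ := (1 - 1/(k:ℝ)) * (1 - ((k:ℝ) * ℓ + 1) * Real.exp (-(k:ℝ) * ℓ)) with hLdef
      have hL_pos : 0 < L := mul_pos h1 hxE
      have hLk_pos : 0 < L * (1/(k:ℝ)) := by positivity
      have hLT : L * (1/(k:ℝ)) ≤ THE k ℓ := by
        rw [THE_eq hk']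
        have e2 := one_sub_exp_nonneg (x := bHE k * ℓ) (by positivity)
        rw [← neg_mul] at e2
        have h2 : (0:ℝ) ≤ (1 - (bHE k * ℓ + 1) * Real.exp (-(bHE k) * ℓ)) * (1/((k:ℝ) * bHE k)) :=
          mul_nonneg e2 (by positivity)
        rw [hLdef]
        linarith
      calc ℓ * fHE k ℓ / THE k ℓ
          ≤ ℓ * fHE k ℓ / (L * (1/(k:ℝ))) :=
            div_le_div_of_nonneg_left (mul_nonneg hℓ.le (fHE_nonneg hk' ℓ)) hLk_pos hLT
        _ = (ℓ * ((1 - 1/(k:ℝ)) * ((k:ℝ)^2 * Real.exp (-(k:ℝ) * ℓ))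
            + bHE k * Real.exp (-(bHE k) * ℓ))) / L := by
            rw [div_eq_div_iff (by positivity) hL_pos.ne']
            rw [fHE, hLdef]
            field_simp
  · -- ℓ f / (1 - T) → 0
    have h1T : Tendsto (fun k : ℕ => 1 - THE k ℓ) atTop (nhds 1) := by
      simpa using hone.sub hT
    simpa [Pi.div_def] using hlf.div h1T one_ne_zero
end
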